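/- Let d ≥ 1, α ∈ (0,2), and β ∈ (d, d+2). There exists a constant c ≥ 1 such that for all x ∈ ℝ^d and 0 < s < t: c^{-1} G_t^{(β)}(x) ≤ ∫_{ℝ^d} G_{t-s}^{(β)}(x-z) G_s^{(β)}(z) dz ≤ c G_t^{(β)}(x), where G_t^{(β)}(x) = t^{-d/α} max(|x|/t^{1/α}, 1)^{-β}. -/

import Mathlib

open MeasureTheory

noncomputable def G (d : ℕ) (α β t : ℝ) (x : EuclideanSpace ℝ (Fin d)) : ℝ :=
  t ^ (-(d : ℝ) / α) * (max (‖x‖ / t ^ (1 / α)) 1) ^ (-β)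

section Aux

open Real Metric FiniteDimensional ENNReal
open scoped ENNReal NNReal

variable {d : ℕ} {α β t s u : ℝ}

lemma G_continuous (d : ℕ) (α β t : ℝ) : Continuous (G d α β t) := by
  apply continuous_const.mul
  apply Continuous.rpow_const
  · exact (continuous_norm.div_const _).max continuous_const
  · intro x
    left
    have : (1:ℝ) ≤ max (‖x‖ / t ^ (1/α)) 1 := le_max_right _ _
    positivity

lemma G_nonneg {t : ℝ} (ht : 0 ≤ t) (x : EuclideanSpace ℝ (Fin d)) : 0 ≤ G d α β t x := by
  unfold G
  have h1 : (0:ℝ) < max (‖x‖ / t ^ (1/α)) 1 := lt_of_lt_of_le one_pos (le_max_right _ _)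
  have h2 : (0:ℝ) ≤ t ^ (-(d:ℝ)/α) := rpow_nonneg ht _
  positivity

lemma G_pos (ht : 0 < t) (x : EuclideanSpace ℝ (Fin d)) : 0 < G d α β t x := by
  unfold G
  have h1 : (0:ℝ) < max (‖x‖ / t ^ (1/α)) 1 := lt_of_lt_of_le one_pos (le_max_right _ _)
  positivity

lemma G_eq (hα0 : 0 < α) (ht : 0 < t) (x : EuclideanSpace ℝ (Fin d)) :
    G d α β t x = t ^ ((β - d) / α) * (max ‖x‖ (t ^ (1/α))) ^ (-β) := by
  have hr : (0:ℝ) < t ^ (1/α) := rpow_pos_of_pos ht _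
  have hM : (0:ℝ) < max ‖x‖ (t ^ (1/α)) := lt_of_lt_of_le hr (le_max_right _ _)
  unfold G
  have h1 : max (‖x‖ / t ^ (1/α)) 1 = max ‖x‖ (t ^ (1/α)) / t ^ (1/α) := by
    rw [← max_div_div_right hr.le, div_self hr.ne']
  have h2 : ((t:ℝ) ^ (1/α)) ^ (-β) = t ^ ((1/α) * (-β)) := (rpow_mul ht.le _ _).symm
  have h3 : t ^ ((β - (d:ℝ))/α) = t ^ (-(d:ℝ)/α) / t ^ (1/α * -β) := by
    rw [← rpow_sub ht]
    congr 1
    field_simp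
    ring
  rw [h1, div_rpow hM.le hr.le, h2, h3]
  ring

lemma G_le_sup (hα0 : 0 < α) (hβ : 0 ≤ β) (ht : 0 < t) (x : EuclideanSpace ℝ (Fin d)) :
    G d α β t x ≤ t ^ (-(d:ℝ) / α) := by
  unfold G
  have h2 : (max (‖x‖ / t ^ (1/α)) 1 : ℝ) ^ (-β) ≤ 1 :=
    rpow_le_one_of_one_le_of_nonpos (le_max_right _ _) (neg_nonpos.2 hβ)
  have h3 : (0:ℝ) < t ^ (-(d:ℝ)/α) := rpow_pos_of_pos ht _
  nlinarith

lemma G_le_tail (hα0 : 0 < α) (hβ : 0 ≤ β) (ht : 0 < t) {r : ℝ} (hr : 0 < r)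
    {x : EuclideanSpace ℝ (Fin d)} (hrx : r ≤ ‖x‖) :
    G d α β t x ≤ t ^ ((β - d) / α) * r ^ (-β) := by
  rw [G_eq hα0 ht]
  have h1 : (max ‖x‖ (t ^ (1/α)) : ℝ) ^ (-β) ≤ r ^ (-β) :=
    rpow_le_rpow_of_nonpos hr (hrx.trans (le_max_left _ _)) (neg_nonpos.2 hβ)
  have h3 : (0:ℝ) ≤ t ^ ((β - d)/α) := (rpow_pos_of_pos ht _).le
  exact mul_le_mul_of_nonneg_left h1 h3

/-- comparability lower bound -/
lemma G_lower (hα0 : 0 < α) (hβd : (d:ℝ) ≤ β) (hβ : 0 ≤ β) (ht : 0 < t)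
    (hu1 : t/2 ≤ u) (hu2 : u ≤ t) {x y : EuclideanSpace ℝ (Fin d)}
    (hy : ‖y‖ ≤ ‖x‖ + t ^ (1/α)) :
    (2:ℝ) ^ (-((β - d) / α)) * 2 ^ (-β) * G d α β t x ≤ G d α β u y := by
  have hu : 0 < u := lt_of_lt_of_le (by linarith) hu1
  have htr : (0:ℝ) < t ^ (1/α) := rpow_pos_of_pos ht _
  have hM : (0:ℝ) < max ‖x‖ (t ^ (1/α)) := lt_of_lt_of_le htr (le_max_right _ _)
  rw [G_eq hα0 ht, G_eq hα0 hu]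
  have hγ : 0 ≤ (β - d)/α := by
    have : (0:ℝ) ≤ β - d := by linarith
    positivity
  have hA : (2:ℝ) ^ (-((β - d)/α)) * t ^ ((β - d)/α) ≤ u ^ ((β - d)/α) := by
    have h1 : ((t/2:ℝ)) ^ ((β - d)/α) ≤ u ^ ((β - d)/α) :=
      rpow_le_rpow (by linarith) hu1 hγ
    have h2 : ((t/2:ℝ)) ^ ((β - d)/α) = t ^ ((β - d)/α) * 2 ^ (-((β - d)/α)) := by
      rw [div_rpow ht.le (by norm_num), rpow_neg (by norm_num : (0:ℝ) ≤ 2), div_eq_mul_inv]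
    linarith [h1, h2.symm.le]
  have hB : (2:ℝ) ^ (-β) * (max ‖x‖ (t ^ (1/α))) ^ (-β) ≤ (max ‖y‖ (u ^ (1/α))) ^ (-β) := by
    have hbase : max ‖y‖ (u ^ (1/α)) ≤ 2 * max ‖x‖ (t ^ (1/α)) := by
      have h1 : ‖y‖ ≤ 2 * max ‖x‖ (t ^ (1/α)) := by
        calc ‖y‖ ≤ ‖x‖ + t ^ (1/α) := hy
          _ ≤ max ‖x‖ (t ^ (1/α)) + max ‖x‖ (t ^ (1/α)) := by
              gcongr
              exacts [le_max_left _ _, le_max_right _ _]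
          _ = 2 * max ‖x‖ (t ^ (1/α)) := by ring
      have h2 : u ^ (1/α) ≤ 2 * max ‖x‖ (t ^ (1/α)) := by
        have : u ^ (1/α) ≤ t ^ (1/α) := rpow_le_rpow hu.le hu2 (by positivity)
        have := le_max_right ‖x‖ (t ^ (1/α))
        linarith
      exact max_le h1 h2
    have h3 : (2 * max ‖x‖ (t ^ (1/α))) ^ (-β) ≤ (max ‖y‖ (u ^ (1/α))) ^ (-β) := by
      have hMy : (0:ℝ) < max ‖y‖ (u ^ (1/α)) :=
        lt_of_lt_of_le (rpow_pos_of_pos hu _) (le_max_right _ _)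
      exact rpow_le_rpow_of_nonpos hMy hbase (neg_nonpos.2 hβ)
    calc (2:ℝ) ^ (-β) * (max ‖x‖ (t ^ (1/α))) ^ (-β)
        = (2 * max ‖x‖ (t ^ (1/α))) ^ (-β) := (mul_rpow (by norm_num) hM.le).symm
      _ ≤ _ := h3
  calc (2:ℝ) ^ (-((β - d)/α)) * 2 ^ (-β) *
        (t ^ ((β - d)/α) * (max ‖x‖ (t ^ (1/α))) ^ (-β))
      = ((2:ℝ) ^ (-((β - d)/α)) * t ^ ((β - d)/α)) *
        ((2:ℝ) ^ (-β) * (max ‖x‖ (t ^ (1/α))) ^ (-β)) := by ring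
    _ ≤ u ^ ((β - d)/α) * (max ‖y‖ (u ^ (1/α))) ^ (-β) := by
        apply mul_le_mul hA hB (by positivity) (by positivity)

noncomputable def GconvCI (d : ℕ) (β : ℝ) : ℝ≥0∞ :=
  ∫⁻ y : EuclideanSpace ℝ (Fin d), ENNReal.ofReal ((max ‖y‖ 1) ^ (-β))

lemma GconvCI_lt_top (hβ0 : 0 ≤ β) (hβ1 : (d:ℝ) < β) : GconvCI d β < ⊤ := by
  have hb : ∀ y : EuclideanSpace ℝ (Fin d),
      (max ‖y‖ 1 : ℝ) ^ (-β) ≤ 2 ^ β * (1 + ‖y‖) ^ (-β) := by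
    intro y
    have h1 : (1 + ‖y‖)/2 ≤ max ‖y‖ 1 := by
      have := le_max_left ‖y‖ (1:ℝ); have := le_max_right ‖y‖ (1:ℝ); linarith
    have h2 : ((1 + ‖y‖)/2 : ℝ) ^ (-β) = 2 ^ β * (1 + ‖y‖) ^ (-β) := by
      have hy : (0:ℝ) ≤ 1 + ‖y‖ := by positivity
      rw [div_rpow hy (by norm_num), rpow_neg hy, rpow_neg (by norm_num : (0:ℝ) ≤ 2),
        div_eq_mul_inv, inv_inv]
      ring
    have h3 : (max ‖y‖ 1 : ℝ) ^ (-β) ≤ ((1 + ‖y‖)/2 : ℝ) ^ (-β) :=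
      rpow_le_rpow_of_nonpos (by positivity) h1 (neg_nonpos.2 hβ0)
    linarith [h2 ▸ h3]
  calc GconvCI d β ≤ ∫⁻ y : EuclideanSpace ℝ (Fin d),
        ENNReal.ofReal (2 ^ β * (1 + ‖y‖) ^ (-β)) :=
        lintegral_mono fun y => ENNReal.ofReal_le_ofReal (hb y)
    _ = ENNReal.ofReal (2 ^ β) *
        ∫⁻ y : EuclideanSpace ℝ (Fin d), ENNReal.ofReal ((1 + ‖y‖) ^ (-β)) := by
        simp_rw [ENNReal.ofReal_mul (by positivity : (0:ℝ) ≤ 2 ^ β)]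
        exact lintegral_const_mul' _ _ ENNReal.ofReal_ne_top
    _ < ⊤ := by
        apply ENNReal.mul_lt_top ENNReal.ofReal_lt_top
        apply finite_integral_one_add_norm
        rwa [finrank_euclideanSpace_fin]

lemma lintegral_comp_smul' {f : EuclideanSpace ℝ (Fin d) → ℝ≥0∞} (hf : Measurable f)
    {r : ℝ} (hr : r ≠ 0) :
    ∫⁻ x, f (r • x) = ENNReal.ofReal |(r ^ d)⁻¹| * ∫⁻ x, f x := by
  have h1 : ∫⁻ x, f (r • x) = ∫⁻ x, f x ∂(Measure.map (r • ·) volume) :=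
    (lintegral_map hf (measurable_const_smul r)).symm
  rw [h1, Measure.map_addHaar_smul volume hr, lintegral_smul_measure, finrank_euclideanSpace_fin, smul_eq_mul]

lemma lintegral_comp_sub_left (f : EuclideanSpace ℝ (Fin d) → ℝ≥0∞) (hf : Measurable f)
    (a : EuclideanSpace ℝ (Fin d)) : ∫⁻ x, f (a - x) = ∫⁻ x, f x := by
  have h0 : ∀ x : EuclideanSpace ℝ (Fin d), a - x = a + (-1 : ℝ) • x := by
    intro x; rw [neg_one_smul, sub_eq_add_neg]
  calc ∫⁻ x, f (a - x) = ∫⁻ x, (fun y => f (a + y)) ((-1:ℝ) • x) := by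
        simp_rw [h0]
    _ = ENNReal.ofReal |(((-1:ℝ)) ^ d)⁻¹| * ∫⁻ y, f (a + y) := by
        apply lintegral_comp_smul' (hf.comp (measurable_const_add a)) (by norm_num)
    _ = ∫⁻ y, f (a + y) := by
        rw [abs_inv, abs_pow, abs_neg, abs_one, one_pow, inv_one, ENNReal.ofReal_one, one_mul]
    _ = ∫⁻ x, f x := lintegral_add_left_eq_self f a

lemma lintegral_G (hα0 : 0 < α) (hβ0 : 0 ≤ β) (hs : 0 < s) :
    ∫⁻ z : EuclideanSpace ℝ (Fin d), ENNReal.ofReal (G d α β s z) = GconvCI d β := by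
  set r : ℝ := s ^ (1/α) with hrdef
  have hr : 0 < r := rpow_pos_of_pos hs _
  have key : ∀ z : EuclideanSpace ℝ (Fin d),
      G d α β s z = s ^ (-(d:ℝ)/α) * (max ‖r⁻¹ • z‖ 1) ^ (-β) := by
    intro z
    unfold G
    congr 3
    rw [norm_smul, norm_inv, Real.norm_eq_abs, abs_of_pos hr, div_eq_inv_mul]
  have hmeas : Measurable fun y : EuclideanSpace ℝ (Fin d) =>
      ENNReal.ofReal ((max ‖y‖ 1) ^ (-β)) := by
    apply (Continuous.measurable ?_)
    apply ENNReal.continuous_ofReal.comp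
    apply Continuous.rpow_const (continuous_norm.max continuous_const)
    intro y; left
    have : (1:ℝ) ≤ max ‖y‖ 1 := le_max_right _ _
    positivity
  calc ∫⁻ z : EuclideanSpace ℝ (Fin d), ENNReal.ofReal (G d α β s z)
      = ∫⁻ z : EuclideanSpace ℝ (Fin d), ENNReal.ofReal (s ^ (-(d:ℝ)/α)) *
          ENNReal.ofReal ((max ‖r⁻¹ • z‖ 1) ^ (-β)) := by
        simp_rw [key]
        congr 1
        ext z
        rw [ENNReal.ofReal_mul (rpow_nonneg hs.le _)]
    _ = ENNReal.ofReal (s ^ (-(d:ℝ)/α)) *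
          ∫⁻ z : EuclideanSpace ℝ (Fin d),
            (fun y : EuclideanSpace ℝ (Fin d) => ENNReal.ofReal ((max ‖y‖ 1) ^ (-β)))
              (r⁻¹ • z) :=
        lintegral_const_mul' _ _ ENNReal.ofReal_ne_top
    _ = ENNReal.ofReal (s ^ (-(d:ℝ)/α)) * (ENNReal.ofReal |((r⁻¹) ^ d)⁻¹| * GconvCI d β) := by
        rw [lintegral_comp_smul' hmeas (inv_ne_zero hr.ne')]
        rfl
    _ = GconvCI d β := by
        rw [inv_pow, inv_inv, abs_of_pos (pow_pos hr d), ← mul_assoc,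
          ← ENNReal.ofReal_mul (rpow_nonneg hs.le _)]
        have : s ^ (-(d:ℝ)/α) * r ^ d = 1 := by
          rw [hrdef, ← rpow_natCast (s ^ (1/α)) d, ← rpow_mul hs.le, ← rpow_add hs]
          rw [show -(d:ℝ)/α + 1/α * d = 0 by field_simp; ring, Real.rpow_zero]
        rw [this, ENNReal.ofReal_one, one_mul]

lemma lintegral_G_shift (hα0 : 0 < α) (hβ0 : 0 ≤ β) (hs : 0 < s)
    (x : EuclideanSpace ℝ (Fin d)) :
    ∫⁻ z : EuclideanSpace ℝ (Fin d), ENNReal.ofReal (G d α β s (x - z)) = GconvCI d β := by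
  rw [lintegral_comp_sub_left (fun z => ENNReal.ofReal (G d α β s z))
    (ENNReal.continuous_ofReal.comp (G_continuous d α β s)).measurable x]
  exact lintegral_G hα0 hβ0 hs

lemma rpow_cancel (hs : 0 < s) : s ^ (-(d:ℝ)/α) * (s ^ (1/α)) ^ d = 1 := by
  rw [← rpow_natCast (s ^ (1/α)) d, ← rpow_mul hs.le, ← rpow_add hs]
  by_cases hα : α = 0
  · subst hα; norm_num
  · rw [show -(d:ℝ)/α + 1/α * d = 0 by field_simp; ring, Real.rpow_zero]

lemma J_meas (a b : ℝ) (x : EuclideanSpace ℝ (Fin d)) :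
    Measurable fun z : EuclideanSpace ℝ (Fin d) =>
      ENNReal.ofReal (G d α β a (x - z) * G d α β b z) := by
  apply Continuous.measurable
  exact ENNReal.continuous_ofReal.comp
    (((G_continuous d α β a).comp (continuous_const.sub continuous_id)).mul
      (G_continuous d α β b))

lemma J_symm (a b : ℝ) (x : EuclideanSpace ℝ (Fin d)) :
    ∫⁻ z, ENNReal.ofReal (G d α β a (x - z) * G d α β b z) =
      ∫⁻ z, ENNReal.ofReal (G d α β b (x - z) * G d α β a z) := by
  rw [← lintegral_comp_sub_left
    (fun z => ENNReal.ofReal (G d α β b (x - z) * G d α β a z)) (J_meas b a x) x]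
  congr 1
  ext z
  rw [show x - (x - z) = z by abel, mul_comm]

lemma J_lower (hα0 : 0 < α) (hβd : (d:ℝ) ≤ β) (hβ0 : 0 ≤ β)
    (hs : 0 < s) (hst : s < t) (h2 : s ≤ t - s) (x : EuclideanSpace ℝ (Fin d)) :
    ENNReal.ofReal ((2 ^ (-((β - d)/α)) * 2 ^ (-β) *
        (volume (ball (0 : EuclideanSpace ℝ (Fin d)) 1)).toReal) * G d α β t x) ≤
      ∫⁻ z, ENNReal.ofReal (G d α β (t - s) (x - z) * G d α β s z) := by
  have ht : 0 < t := hs.trans hst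
  have hts : 0 < t - s := by linarith
  have hhalf : t/2 ≤ t - s := by linarith
  have hsr : (0:ℝ) < s ^ (1/α) := rpow_pos_of_pos hs _
  set c0 : ℝ := 2 ^ (-((β - d)/α)) * 2 ^ (-β) with hc0
  have hc0pos : 0 < c0 := by positivity
  set ω : ℝ := (volume (ball (0 : EuclideanSpace ℝ (Fin d)) 1)).toReal with hω
  have hω0 : 0 ≤ ω := ENNReal.toReal_nonneg
  set B : Set (EuclideanSpace ℝ (Fin d)) := closedBall 0 (s ^ (1/α)) with hB
  have key : ∀ z ∈ B, ENNReal.ofReal (c0 * G d α β t x * s ^ (-(d:ℝ)/α)) ≤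
      ENNReal.ofReal (G d α β (t - s) (x - z) * G d α β s z) := by
    intro z hz
    have hz' : ‖z‖ ≤ s ^ (1/α) := by
      simpa [hB, dist_zero_right] using hz
    have hGs : G d α β s z = s ^ (-(d:ℝ)/α) := by
      unfold G
      rw [max_eq_right ((div_le_one hsr).2 hz'), Real.one_rpow, mul_one]
    have hy : ‖x - z‖ ≤ ‖x‖ + t ^ (1/α) := by
      have h3 : s ^ (1/α) ≤ t ^ (1/α) :=
        rpow_le_rpow hs.le (by linarith) (by positivity)
      calc ‖x - z‖ ≤ ‖x‖ + ‖z‖ := norm_sub_le _ _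
        _ ≤ ‖x‖ + t ^ (1/α) := by linarith
    have hG1 : c0 * G d α β t x ≤ G d α β (t - s) (x - z) :=
      G_lower hα0 hβd hβ0 ht hhalf (by linarith) hy
    apply ENNReal.ofReal_le_ofReal
    rw [hGs]
    exact mul_le_mul_of_nonneg_right hG1 (rpow_nonneg hs.le _)
  have hvol : volume B = ENNReal.ofReal ((s ^ (1/α)) ^ d * ω) := by
    rw [hB, Measure.addHaar_closedBall _ _ hsr.le, finrank_euclideanSpace_fin,
      ENNReal.ofReal_mul (by positivity), hω,
      ENNReal.ofReal_toReal measure_ball_lt_top.ne]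
  calc ENNReal.ofReal ((c0 * ω) * G d α β t x)
      = ENNReal.ofReal (c0 * G d α β t x * s ^ (-(d:ℝ)/α)) * volume B := by
        rw [hvol, ← ENNReal.ofReal_mul (mul_nonneg (mul_nonneg hc0pos.le
          (G_nonneg ht.le x)) (rpow_nonneg hs.le _))]
        congr 1
        have hcan := rpow_cancel (α := α) (d := d) hs
        linear_combination (-(c0 * G d α β t x * ω)) * hcan
    _ = ∫⁻ _ in B, ENNReal.ofReal (c0 * G d α β t x * s ^ (-(d:ℝ)/α)) :=
        (setLIntegral_const _ _).symm
    _ ≤ ∫⁻ z in B, ENNReal.ofReal (G d α β (t - s) (x - z) * G d α β s z) :=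
        setLIntegral_mono' measurableSet_closedBall key
    _ ≤ ∫⁻ z, ENNReal.ofReal (G d α β (t - s) (x - z) * G d α β s z) :=
        setLIntegral_le_lintegral _ _

lemma J_upper (hα0 : 0 < α) (hβ0 : 0 ≤ β) (hβ1 : (d:ℝ) < β)
    (hs : 0 < s) (hst : s < t) (h2 : s ≤ t - s) (x : EuclideanSpace ℝ (Fin d)) :
    ∫⁻ z, ENNReal.ofReal (G d α β (t - s) (x - z) * G d α β s z) ≤
      ENNReal.ofReal (((2 ^ ((d:ℝ)/α) + 2 ^ (β + 1)) * (GconvCI d β).toReal) *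
        G d α β t x) := by
  have ht : 0 < t := hs.trans hst
  have hts : 0 < t - s := by linarith
  have hhalf : t/2 ≤ t - s := by linarith
  have htr : (0:ℝ) < t ^ (1/α) := rpow_pos_of_pos ht _
  set CIr : ℝ := (GconvCI d β).toReal with hCIrdef
  have hCI : GconvCI d β = ENNReal.ofReal CIr :=
    (ENNReal.ofReal_toReal (GconvCI_lt_top hβ0 hβ1).ne).symm
  have hCIr0 : 0 ≤ CIr := ENNReal.toReal_nonneg
  have hGnn := G_nonneg (α := α) (β := β) ht.le x
  by_cases hx : ‖x‖ ≤ t ^ (1/α)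
  · -- near-diagonal case
    have hGt : G d α β t x = t ^ (-(d:ℝ)/α) := by
      unfold G
      rw [max_eq_right ((div_le_one htr).2 hx), Real.one_rpow, mul_one]
    have hmono : (t - s) ^ (-(d:ℝ)/α) ≤ 2 ^ ((d:ℝ)/α) * t ^ (-(d:ℝ)/α) := by
      have hexp : -(d:ℝ)/α ≤ 0 := by
        apply div_nonpos_of_nonpos_of_nonneg <;> [simp; exact hα0.le]
      have h1 : (t - s) ^ (-(d:ℝ)/α) ≤ (t/2) ^ (-(d:ℝ)/α) :=
        rpow_le_rpow_of_nonpos (by linarith) hhalf hexp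
      have h2 : ((t/2:ℝ)) ^ (-(d:ℝ)/α) = 2 ^ ((d:ℝ)/α) * t ^ (-(d:ℝ)/α) := by
        rw [div_rpow ht.le (by norm_num), neg_div,
          Real.rpow_neg (by norm_num : (0:ℝ) ≤ 2), div_inv_eq_mul]
        ring
      linarith
    calc ∫⁻ z, ENNReal.ofReal (G d α β (t - s) (x - z) * G d α β s z)
        ≤ ∫⁻ z, ENNReal.ofReal ((t - s) ^ (-(d:ℝ)/α) * G d α β s z) :=
          lintegral_mono fun z => ENNReal.ofReal_le_ofReal
            (mul_le_mul_of_nonneg_right (G_le_sup hα0 hβ0 hts _)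
              (G_nonneg hs.le _))
      _ = ENNReal.ofReal ((t - s) ^ (-(d:ℝ)/α)) * GconvCI d β := by
          simp_rw [ENNReal.ofReal_mul (rpow_nonneg hts.le _)]
          rw [lintegral_const_mul' _ _ ENNReal.ofReal_ne_top, lintegral_G hα0 hβ0 hs]
      _ ≤ ENNReal.ofReal (2 ^ ((d:ℝ)/α) * t ^ (-(d:ℝ)/α)) * ENNReal.ofReal CIr := by
          rw [← hCI]
          exact mul_le_mul_left (ENNReal.ofReal_le_ofReal hmono) _
      _ = ENNReal.ofReal (2 ^ ((d:ℝ)/α) * CIr * G d α β t x) := by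
          rw [← ENNReal.ofReal_mul (by positivity), hGt]
          ring_nf
      _ ≤ ENNReal.ofReal (((2 ^ ((d:ℝ)/α) + 2 ^ (β + 1)) * CIr) * G d α β t x) := by
          apply ENNReal.ofReal_le_ofReal
          have h1 : (0:ℝ) ≤ 2 ^ (β + 1) := by positivity
          nlinarith [mul_nonneg (mul_nonneg h1 hCIr0) hGnn]
  · -- off-diagonal case
    push_neg at hx
    have hx0 : (0:ℝ) < ‖x‖ := htr.trans hx
    set A : Set (EuclideanSpace ℝ (Fin d)) :=
      (fun z => x - z) ⁻¹' closedBall 0 (‖x‖/2) with hA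
    have hAmeas : MeasurableSet A :=
      measurableSet_closedBall.preimage (continuous_const.sub continuous_id).measurable
    set D : ℝ := t ^ ((β - (d:ℝ))/α) * (‖x‖/2) ^ (-β) with hD
    have hD0 : 0 ≤ D := by positivity
    have hexpnn : 0 ≤ (β - (d:ℝ))/α := by
      have : (0:ℝ) ≤ β - d := by linarith
      positivity
    have hGsD : ∀ z ∈ A, G d α β s z ≤ D := by
      intro z hz
      have hz' : ‖x - z‖ ≤ ‖x‖/2 := by simpa [hA, dist_zero_right] using hz
      have hz2 : ‖x‖/2 ≤ ‖z‖ := by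
        have := norm_sub_norm_le x z
        linarith
      calc G d α β s z ≤ s ^ ((β - (d:ℝ))/α) * (‖x‖/2) ^ (-β) :=
            G_le_tail hα0 hβ0 hs (by positivity) hz2
        _ ≤ D := by
            rw [hD]
            exact mul_le_mul_of_nonneg_right
              (rpow_le_rpow hs.le (by linarith) hexpnn) (by positivity)
    have hGtsD : ∀ z ∈ Aᶜ, G d α β (t - s) (x - z) ≤ D := by
      intro z hz
      have hz' : ‖x‖/2 ≤ ‖x - z‖ := by
        have : ¬ ‖x - z‖ ≤ ‖x‖/2 := by simpa [hA, dist_zero_right] using hz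
        linarith
      calc G d α β (t - s) (x - z) ≤ (t - s) ^ ((β - (d:ℝ))/α) * (‖x‖/2) ^ (-β) :=
            G_le_tail hα0 hβ0 hts (by positivity) hz'
        _ ≤ D := by
            rw [hD]
            exact mul_le_mul_of_nonneg_right
              (rpow_le_rpow hts.le (by linarith) hexpnn) (by positivity)
    have part1 : ∫⁻ z in A, ENNReal.ofReal (G d α β (t - s) (x - z) * G d α β s z) ≤
        ENNReal.ofReal (CIr * D) := by
      calc ∫⁻ z in A, ENNReal.ofReal (G d α β (t - s) (x - z) * G d α β s z)
          ≤ ∫⁻ z in A, ENNReal.ofReal (G d α β (t - s) (x - z) * D) :=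
            setLIntegral_mono' hAmeas fun z hz => ENNReal.ofReal_le_ofReal
              (mul_le_mul_of_nonneg_left (hGsD z hz) (G_nonneg hts.le _))
        _ ≤ ∫⁻ z, ENNReal.ofReal (G d α β (t - s) (x - z) * D) :=
            setLIntegral_le_lintegral _ _
        _ = (∫⁻ z, ENNReal.ofReal (G d α β (t - s) (x - z))) * ENNReal.ofReal D := by
            simp_rw [ENNReal.ofReal_mul' hD0]
            exact lintegral_mul_const' _ _ ENNReal.ofReal_ne_top
        _ = ENNReal.ofReal (CIr * D) := by
            rw [lintegral_G_shift hα0 hβ0 hts, hCI, ← ENNReal.ofReal_mul hCIr0]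
    have part2 : ∫⁻ z in Aᶜ, ENNReal.ofReal (G d α β (t - s) (x - z) * G d α β s z) ≤
        ENNReal.ofReal (CIr * D) := by
      calc ∫⁻ z in Aᶜ, ENNReal.ofReal (G d α β (t - s) (x - z) * G d α β s z)
          ≤ ∫⁻ z in Aᶜ, ENNReal.ofReal (D * G d α β s z) :=
            setLIntegral_mono' hAmeas.compl fun z hz => ENNReal.ofReal_le_ofReal
              (mul_le_mul_of_nonneg_right (hGtsD z hz) (G_nonneg hs.le _))
        _ ≤ ∫⁻ z, ENNReal.ofReal (D * G d α β s z) :=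
            setLIntegral_le_lintegral _ _
        _ = ENNReal.ofReal D * ∫⁻ z, ENNReal.ofReal (G d α β s z) := by
            simp_rw [ENNReal.ofReal_mul hD0]
            exact lintegral_const_mul' _ _ ENNReal.ofReal_ne_top
        _ = ENNReal.ofReal (CIr * D) := by
            rw [lintegral_G hα0 hβ0 hs, hCI, ← ENNReal.ofReal_mul hD0, mul_comm D CIr]
    have hDG : D = 2 ^ β * G d α β t x := by
      rw [hD, G_eq hα0 ht, max_eq_left hx.le]
      rw [div_rpow (norm_nonneg x) (by norm_num), Real.rpow_neg (norm_nonneg x),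
        Real.rpow_neg (by norm_num : (0:ℝ) ≤ 2), div_inv_eq_mul]
      ring
    calc ∫⁻ z, ENNReal.ofReal (G d α β (t - s) (x - z) * G d α β s z)
        = (∫⁻ z in A, ENNReal.ofReal (G d α β (t - s) (x - z) * G d α β s z)) +
          ∫⁻ z in Aᶜ, ENNReal.ofReal (G d α β (t - s) (x - z) * G d α β s z) :=
          (lintegral_add_compl _ hAmeas).symm
      _ ≤ ENNReal.ofReal (CIr * D) + ENNReal.ofReal (CIr * D) :=
          add_le_add part1 part2
      _ = ENNReal.ofReal (2 * (CIr * D)) := by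
          rw [← ENNReal.ofReal_add (by positivity) (by positivity)]
          ring_nf
      _ ≤ ENNReal.ofReal (((2 ^ ((d:ℝ)/α) + 2 ^ (β + 1)) * CIr) * G d α β t x) := by
          apply ENNReal.ofReal_le_ofReal
          rw [hDG]
          have h1 : (0:ℝ) ≤ 2 ^ ((d:ℝ)/α) := by positivity
          have h2 : ((2:ℝ)) ^ (β + 1) = 2 ^ β * 2 := by
            rw [Real.rpow_add (by norm_num) β 1, Real.rpow_one]
          have h3 : (0:ℝ) ≤ 2 ^ β := by positivity
          have h4 : (0:ℝ) ≤ 2 ^ ((d:ℝ)/α) * CIr * G d α β t x :=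
            mul_nonneg (mul_nonneg h1 hCIr0) hGnn
          have h5 : (2 ^ ((d:ℝ)/α) + 2 ^ (β + 1)) * CIr * G d α β t x =
              2 ^ ((d:ℝ)/α) * CIr * G d α β t x +
                2 * (CIr * (2 ^ β * G d α β t x)) := by
            rw [h2]; ring
          linarith
end Aux

theorem G_convolution_comparable (d : ℕ) (hd : 1 ≤ d) (α β : ℝ)
    (hα0 : 0 < α) (hα2 : α < 2) (hβ1 : (d : ℝ) < β) (hβ2 : β < (d : ℝ) + 2) :
    ∃ c : ℝ, 1 ≤ c ∧ ∀ (x : EuclideanSpace ℝ (Fin d)) (s t : ℝ), 0 < s → s < t →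
      ENNReal.ofReal (c⁻¹ * G d α β t x) ≤
        (∫⁻ z, ENNReal.ofReal (G d α β (t - s) (x - z) * G d α β s z)) ∧
      (∫⁻ z, ENNReal.ofReal (G d α β (t - s) (x - z) * G d α β s z)) ≤
        ENNReal.ofReal (c * G d α β t x) := by
  have hβ0 : (0:ℝ) ≤ β := le_trans (Nat.cast_nonneg d) hβ1.le
  set ω : ℝ := (volume (Metric.ball (0 : EuclideanSpace ℝ (Fin d)) 1)).toReal with hω
  have hωpos : 0 < ω :=
    ENNReal.toReal_pos (Metric.measure_ball_pos volume 0 one_pos).ne' measure_ball_lt_top.ne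
  set c0 : ℝ := 2 ^ (-((β - (d:ℝ))/α)) * 2 ^ (-β) with hc0
  have hc0pos : 0 < c0 := by
    rw [hc0]; positivity
  set CIr : ℝ := (GconvCI d β).toReal with hCIr
  have hCIr0 : 0 ≤ CIr := ENNReal.toReal_nonneg
  set K : ℝ := (2 ^ ((d:ℝ)/α) + 2 ^ (β + 1)) * CIr with hK
  have hK0 : 0 ≤ K := by
    rw [hK]; positivity
  refine ⟨K + (c0 * ω)⁻¹ + 1, ?_, ?_⟩
  · have h1 : 0 < (c0 * ω)⁻¹ := by positivity
    linarith
  intro x s t hs hst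
  have ht : 0 < t := hs.trans hst
  have hGnn : 0 ≤ G d α β t x := G_nonneg ht.le x
  have hcK : K ≤ K + (c0 * ω)⁻¹ + 1 := by
    have h1 : 0 < (c0 * ω)⁻¹ := by positivity
    linarith
  have hcinv' : (K + (c0 * ω)⁻¹ + 1)⁻¹ ≤ c0 * ω := by
    have h1 : 0 < (c0 * ω)⁻¹ := by positivity
    have h2 : (c0 * ω)⁻¹ ≤ K + (c0 * ω)⁻¹ + 1 := by linarith
    have h3 := inv_anti₀ h1 h2
    rwa [inv_inv] at h3
  rcases le_or_gt s (t - s) with h2 | h2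
  · constructor
    · refine le_trans (ENNReal.ofReal_le_ofReal ?_) (J_lower hα0 hβ1.le hβ0 hs hst h2 x)
      exact mul_le_mul_of_nonneg_right hcinv' hGnn
    · refine le_trans (J_upper hα0 hβ0 hβ1 hs hst h2 x) (ENNReal.ofReal_le_ofReal ?_)
      exact mul_le_mul_of_nonneg_right hcK hGnn
  · have hts : 0 < t - s := by linarith
    have hst' : t - s < t := by linarith
    have h2' : t - s ≤ t - (t - s) := by linarith
    have hsymm := J_symm (α := α) (β := β) (t - s) s x
    have hlow := J_lower hα0 hβ1.le hβ0 hts hst' h2' x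
    have hup := J_upper hα0 hβ0 hβ1 hts hst' h2' x
    rw [show t - (t - s) = s by ring] at hlow hup
    rw [← hsymm] at hlow hup
    constructor
    · exact le_trans (ENNReal.ofReal_le_ofReal
        (mul_le_mul_of_nonneg_right hcinv' hGnn)) hlow
    · exact le_trans hup (ENNReal.ofReal_le_ofReal
        (mul_le_mul_of_nonneg_right hcK hGnn))
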